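/- The modified Bessel function of the second kind of order zero, K₀(x) = −(ln(x/2) + γ) I₀(x) + ∑_{n=0}^∞ φ(n) x²ⁿ / (2²ⁿ (n!)²), is well defined and twice differentiable on (0,∞) and satisfies the modified Bessel equation of order zero: x K₀''(x) + K₀'(x) − x K₀(x) = 0 for all x > 0. -/

import Mathlib

/-- The Bessel function of the first kind of order zero,
`J₀(x) = ∑ (−1)ⁿ x²ⁿ / (2²ⁿ (n!)²)`. -/
noncomputable def besselJ0 (x : ℝ) : ℝ :=
  ∑' n : ℕ, (-1 : ℝ) ^ n * x ^ (2 * n) / (2 ^ (2 * n) * ((n.factorial : ℝ)) ^ 2)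

/-- `φ(n) = ∑_{m=1}^n 1/m`, with `φ(0) = 0`. -/
noncomputable def harmonicPhi (n : ℕ) : ℝ :=
  ∑ m ∈ Finset.range n, (1 : ℝ) / (m + 1)

/-- Weber's Bessel function of order zero,
`Y₀(x) = (2/π)[(ln(x/2) + γ) J₀(x) − ∑ (−1)ⁿ φ(n) x²ⁿ / (2²ⁿ (n!)²)]`. -/
noncomputable def besselY0 (x : ℝ) : ℝ :=
  (2 / Real.pi) *
    ((Real.log (x / 2) + Real.eulerMascheroniConstant) * besselJ0 x -
      ∑' n : ℕ, (-1 : ℝ) ^ n * harmonicPhi n * x ^ (2 * n) /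
        (2 ^ (2 * n) * ((n.factorial : ℝ)) ^ 2))

/-- The modified Bessel function of the first kind of order zero,
`I₀(x) = ∑ x²ⁿ / (2²ⁿ (n!)²)`. -/
noncomputable def besselI0 (x : ℝ) : ℝ :=
  ∑' n : ℕ, x ^ (2 * n) / (2 ^ (2 * n) * ((n.factorial : ℝ)) ^ 2)

/-- The modified Bessel function of the second kind of order zero,
`K₀(x) = −(ln(x/2) + γ) I₀(x) + ∑ φ(n) x²ⁿ / (2²ⁿ (n!)²)`. -/
noncomputable def besselK0 (x : ℝ) : ℝ :=
  -(Real.log (x / 2) + Real.eulerMascheroniConstant) * besselI0 x +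
    ∑' n : ℕ, harmonicPhi n * x ^ (2 * n) / (2 ^ (2 * n) * ((n.factorial : ℝ)) ^ 2)

namespace BesselAux

open Function

noncomputable def gs (a : ℕ → ℝ) (x : ℝ) : ℝ := ∑' n, a n * x ^ n

noncomputable def dd (a : ℕ → ℝ) (n : ℕ) : ℝ := ((n : ℝ) + 1) * a (n + 1)

noncomputable def su (a : ℕ → ℝ) : ℕ → ℝ
  | 0 => 0
  | n + 1 => a n

def Good (a : ℕ → ℝ) : Prop := ∀ R : ℝ, 0 < R → Summable fun n => |a n| * R ^ n

lemma tsum_shift (f : ℕ → ℝ) (h0 : f 0 = 0) : ∑' n, f (n + 1) = ∑' n, f n := by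
  refine Nat.succ_injective.tsum_eq ?_
  intro n hn
  rcases n with _ | m
  · exact absurd h0 hn
  · exact ⟨m, rfl⟩

lemma summable_shift {f : ℕ → ℝ} (h0 : f 0 = 0) (h : Summable fun n => f (n + 1)) :
    Summable f := by
  refine (Nat.succ_injective.summable_iff ?_).mp h
  intro n hn
  rcases n with _ | m
  · exact h0
  · exact absurd ⟨m, rfl⟩ hn

lemma good_dd {a : ℕ → ℝ} (ha : Good a) : Good (dd a) := by
  intro R hR
  have h2R' : Summable fun n => |a (n + 1)| * (2 * R) ^ (n + 1) :=
    (ha (2 * R) (by linarith)).comp_injective Nat.succ_injective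
  have h3 : Summable fun n => (1 / R) * (|a (n + 1)| * (2 * R) ^ (n + 1)) :=
    h2R'.mul_left _
  refine h3.of_nonneg_of_le (fun n => by positivity) (fun n => ?_)
  have h4 : |dd a n| = ((n : ℝ) + 1) * |a (n + 1)| := by
    rw [dd, abs_mul, abs_of_nonneg (by positivity)]
  have h5 : ((n : ℝ) + 1) ≤ 2 ^ (n + 1) := by
    exact_mod_cast Nat.le_of_lt (Nat.lt_two_pow_self (n := n + 1))
  have hEq : (1 / R) * (|a (n + 1)| * (2 * R) ^ (n + 1))
      = (2 ^ (n + 1) * |a (n + 1)|) * R ^ n := by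
    field_simp
    ring
  rw [h4, hEq]
  exact mul_le_mul_of_nonneg_right
    (mul_le_mul_of_nonneg_right h5 (abs_nonneg _)) (by positivity)

lemma summable_good {a : ℕ → ℝ} (ha : Good a) (x : ℝ) :
    Summable fun n => a n * x ^ n := by
  have hR : (0 : ℝ) < |x| + 1 := by positivity
  refine (ha _ hR).of_norm_bounded (fun n => ?_)
  rw [norm_mul, norm_pow, Real.norm_eq_abs, Real.norm_eq_abs]
  exact mul_le_mul_of_nonneg_left
    (pow_le_pow_left₀ (abs_nonneg _) (by linarith) n) (abs_nonneg _)

lemma hasDerivAt_gs {a : ℕ → ℝ} (ha : Good a) (x : ℝ) :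
    HasDerivAt (gs a) (gs (dd a) x) x := by
  set R : ℝ := |x| + 1 with hRdef
  have hR : (0 : ℝ) < R := by positivity
  have hxR : x ∈ Metric.ball (0 : ℝ) R := by
    simp only [Metric.mem_ball, Real.dist_eq, sub_zero, hRdef]
    linarith [abs_nonneg x]
  have hu : Summable fun n : ℕ => (n : ℝ) * |a n| * R ^ (n - 1) := by
    refine summable_shift (by simp) ?_
    refine (good_dd ha R hR).congr (fun n => ?_)
    rw [dd, abs_mul, abs_of_nonneg (show (0:ℝ) ≤ (n:ℝ) + 1 by positivity)]
    push_cast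
    ring_nf
  have key : HasDerivAt (fun z => ∑' n : ℕ, a n * z ^ n)
      (∑' n : ℕ, ((n : ℝ) * a n) * x ^ (n - 1)) x := by
    apply hasDerivAt_tsum_of_isPreconnected hu Metric.isOpen_ball
      (convex_ball (0:ℝ) R).isPreconnected
      (g := fun n y => a n * y ^ n) (g' := fun (n : ℕ) (y : ℝ) => ((n : ℝ) * a n) * y ^ (n - 1))
      ?_ ?_ hxR (summable_good ha x) hxR
    · intro n y _
      simpa [mul_comm, mul_assoc, mul_left_comm] using
        (hasDerivAt_pow n y).const_mul (a n)
    · intro n y hy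
      rcases n with _ | m
      · simpa using by positivity
      · have hy' : |y| ≤ R := by
          rw [Metric.mem_ball, Real.dist_eq, sub_zero] at hy
          exact le_of_lt hy
        show ‖(((m + 1 : ℕ) : ℝ) * a (m + 1)) * y ^ (m + 1 - 1)‖
            ≤ ((m + 1 : ℕ) : ℝ) * |a (m + 1)| * R ^ (m + 1 - 1)
        rw [Real.norm_eq_abs, abs_mul, abs_mul]
        have hc : |((m + 1 : ℕ) : ℝ)| = ((m + 1 : ℕ) : ℝ) := abs_of_nonneg (by positivity)
        rw [hc]
        apply mul_le_mul_of_nonneg_left _ (by positivity)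
        rw [abs_pow]
        exact pow_le_pow_left₀ (abs_nonneg _) hy' _
  have hshift : ∑' n : ℕ, ((n : ℝ) * a n) * x ^ (n - 1) = gs (dd a) x := by
    rw [gs, ← tsum_shift (fun n : ℕ => ((n : ℝ) * a n) * x ^ (n - 1)) (by simp)]
    refine tsum_congr (fun n => ?_)
    show ((((n : ℕ) + 1 : ℕ) : ℝ) * a (n + 1)) * x ^ (n + 1 - 1) = dd a n * x ^ n
    rw [dd, Nat.add_sub_cancel]
    push_cast
    ring
  rw [← hshift]
  exact key

/-- even-index coefficient of `I₀`. -/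
noncomputable def ic (k : ℕ) : ℝ := ((2 : ℝ) ^ (2 * k) * ((k.factorial : ℝ)) ^ 2)⁻¹

noncomputable def iseq (n : ℕ) : ℝ := if n % 2 = 0 then ic (n / 2) else 0

noncomputable def sseq (n : ℕ) : ℝ :=
  if n % 2 = 0 then harmonicPhi (n / 2) * ic (n / 2) else 0

lemma ic_pos (k : ℕ) : 0 < ic k := by
  have := Nat.factorial_pos k
  rw [ic]
  positivity

lemma ic_succ (k : ℕ) : ic (k + 1) = ic k / (4 * ((k : ℝ) + 1) ^ 2) := by
  have hf : (0 : ℝ) < (k.factorial : ℝ) := by exact_mod_cast Nat.factorial_pos k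
  rw [ic, ic, Nat.factorial_succ]
  push_cast
  rw [show 2 * (k + 1) = 2 * k + 2 from rfl]
  rw [pow_add]
  field_simp
  ring

lemma harmonicPhi_succ (k : ℕ) :
    harmonicPhi (k + 1) = harmonicPhi k + 1 / ((k : ℝ) + 1) := by
  rw [harmonicPhi, harmonicPhi, Finset.sum_range_succ]

lemma harmonicPhi_nonneg (k : ℕ) : 0 ≤ harmonicPhi k := by
  refine Finset.sum_nonneg (fun m _ => by positivity)

lemma harmonicPhi_le (k : ℕ) : harmonicPhi k ≤ 2 ^ k := by
  calc harmonicPhi k ≤ ∑ m ∈ Finset.range k, (1 : ℝ) := by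
        refine Finset.sum_le_sum (fun m _ => ?_)
        rw [div_le_one (by positivity)]
        linarith [Nat.cast_nonneg (α := ℝ) m]
    _ = (k : ℝ) := by simp
    _ ≤ 2 ^ k := by
        exact_mod_cast Nat.le_of_lt (Nat.lt_two_pow_self (n := k))

lemma two_mul_injective : Function.Injective (fun k : ℕ => 2 * k) := by
  intro a b h
  simp only at h
  omega

/-- Key goodness lemma for sequences supported on evens with bounded numerators. -/
lemma good_of_even (C : ℕ → ℝ) (hC : ∀ k, |C k| ≤ 2 ^ k) :
    Good (fun n => if n % 2 = 0 then C (n / 2) * ic (n / 2) else 0) := by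
  intro R hR
  set a : ℕ → ℝ := fun n => if n % 2 = 0 then C (n / 2) * ic (n / 2) else 0 with ha
  have hsupp : ∀ n ∉ Set.range (fun k : ℕ => 2 * k), |a n| * R ^ n = 0 := by
    intro n hn
    have : n % 2 ≠ 0 := by
      intro h
      refine hn ⟨n / 2, ?_⟩
      simp only
      omega
    simp [ha, this]
  refine (two_mul_injective.summable_iff hsupp).mp ?_
  have hexp : Summable fun k : ℕ => (R ^ 2 / 2) ^ k / (k.factorial : ℝ) :=
    Real.summable_pow_div_factorial _
  refine hexp.of_nonneg_of_le (fun k => mul_nonneg (abs_nonneg _) (by positivity)) (fun k => ?_)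
  show |a (2 * k)| * R ^ (2 * k) ≤ (R ^ 2 / 2) ^ k / (k.factorial : ℝ)
  have h2k : (2 * k) % 2 = 0 := by omega
  have h2k' : (2 * k) / 2 = k := by omega
  have hfk : (1 : ℝ) ≤ (k.factorial : ℝ) := by exact_mod_cast Nat.factorial_pos k
  have : |a (2 * k)| = |C k| * ic k := by
    rw [ha]
    simp only [h2k, h2k', if_pos]
    rw [abs_mul, abs_of_pos (ic_pos k)]
  rw [this]
  have hpow : ic k * R ^ (2 * k) = (R ^ 2 / 4) ^ k / ((k.factorial : ℝ)) ^ 2 := by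
    rw [ic, pow_mul, pow_mul, div_pow]
    have hf : (0 : ℝ) < (k.factorial : ℝ) := by exact_mod_cast Nat.factorial_pos k
    field_simp
    ring
  calc |C k| * ic k * R ^ (2 * k) = |C k| * ((R ^ 2 / 4) ^ k / ((k.factorial : ℝ)) ^ 2) := by
        rw [mul_assoc, hpow]
    _ ≤ 2 ^ k * ((R ^ 2 / 4) ^ k / ((k.factorial : ℝ)) ^ 2) := by
        apply mul_le_mul_of_nonneg_right (hC k) (by positivity)
    _ ≤ (R ^ 2 / 2) ^ k / (k.factorial : ℝ) := by
        have hf : (0 : ℝ) < (k.factorial : ℝ) := by exact_mod_cast Nat.factorial_pos k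
        have h1 : (2 : ℝ) ^ k * (R ^ 2 / 4) ^ k = (R ^ 2 / 2) ^ k := by
          rw [← mul_pow]
          congr 1
          ring
        rw [← mul_div_assoc, h1]
        refine div_le_div_of_nonneg_left (by positivity) hf ?_
        nlinarith [hfk]

lemma good_iseq : Good iseq := by
  have := good_of_even (fun _ => 1) (fun k => by
    rw [abs_one]
    exact_mod_cast Nat.one_le_two_pow)
  simp only [one_mul] at this
  exact this

lemma good_sseq : Good sseq := by
  have := good_of_even harmonicPhi (fun k => by
    rw [abs_of_nonneg (harmonicPhi_nonneg k)]
    exact harmonicPhi_le k)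
  exact this

lemma iseq_even {n k : ℕ} (h : n = 2 * k) : iseq n = ic k := by
  subst h; rw [iseq, if_pos (by omega)]; congr 1; omega

lemma iseq_odd {n : ℕ} (h : n % 2 = 1) : iseq n = 0 := by
  rw [iseq, if_neg (by omega)]

lemma sseq_even {n k : ℕ} (h : n = 2 * k) : sseq n = harmonicPhi k * ic k := by
  subst h; rw [sseq, if_pos (by omega)]
  congr 2 <;> omega

lemma sseq_odd {n : ℕ} (h : n % 2 = 1) : sseq n = 0 := by
  rw [sseq, if_neg (by omega)]

lemma coeffA (n : ℕ) : su (dd (dd iseq)) n + dd iseq n - su iseq n = 0 := by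
  rcases n with _ | n
  · simp [su, dd, iseq_odd (show 1 % 2 = 1 from rfl)]
  · show dd (dd iseq) n + dd iseq (n + 1) - iseq n = 0
    simp only [dd]
    rcases Nat.even_or_odd n with ⟨k, hk⟩ | ⟨k, hk⟩
    · have h1 : iseq n = ic k := iseq_even (by omega)
      have h2 : iseq (n + 1 + 1) = ic (k + 1) := iseq_even (by omega)
      have hn : (n : ℝ) = 2 * (k : ℝ) := by
        have h : n = 2 * k := by omega
        subst h; push_cast; ring
      rw [h1, h2, ic_succ]
      push_cast
      rw [hn]
      have hk1 : ((k : ℝ) + 1) ≠ 0 := by positivity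
      field_simp
      ring
    · have h1 : iseq n = 0 := iseq_odd (by omega)
      have h2 : iseq (n + 1 + 1) = 0 := iseq_odd (by omega)
      rw [h1, h2]
      ring

lemma coeffB (n : ℕ) :
    su (dd (dd sseq)) n + dd sseq n - su sseq n - 2 * dd iseq n = 0 := by
  rcases n with _ | n
  · simp [su, dd, iseq_odd (show 1 % 2 = 1 from rfl), sseq_odd (show 1 % 2 = 1 from rfl)]
  · show dd (dd sseq) n + dd sseq (n + 1) - sseq n - 2 * dd iseq (n + 1) = 0
    simp only [dd]
    rcases Nat.even_or_odd n with ⟨k, hk⟩ | ⟨k, hk⟩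
    · have h1 : sseq n = harmonicPhi k * ic k := sseq_even (by omega)
      have h2 : sseq (n + 1 + 1) = harmonicPhi (k + 1) * ic (k + 1) := sseq_even (by omega)
      have h3 : iseq (n + 1 + 1) = ic (k + 1) := iseq_even (by omega)
      have hn : (n : ℝ) = 2 * (k : ℝ) := by
        have h : n = 2 * k := by omega
        subst h; push_cast; ring
      rw [h1, h2, h3, ic_succ, harmonicPhi_succ]
      push_cast
      rw [hn]
      have hk1 : ((k : ℝ) + 1) ≠ 0 := by positivity
      field_simp
      ring
    · have h1 : sseq n = 0 := sseq_odd (by omega)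
      have h2 : sseq (n + 1 + 1) = 0 := sseq_odd (by omega)
      have h3 : iseq (n + 1 + 1) = 0 := iseq_odd (by omega)
      rw [h1, h2, h3]
      ring

lemma summable_su {u : ℕ → ℝ} {x : ℝ} (h : Summable fun n => u n * x ^ n) :
    Summable fun n => su u n * x ^ n := by
  refine summable_shift (by simp [su]) ?_
  refine (h.mul_right x).congr (fun n => ?_)
  show u n * x ^ n * x = su u (n + 1) * x ^ (n + 1)
  rw [su, pow_succ]
  ring

lemma mul_gs (u : ℕ → ℝ) (x : ℝ) : x * gs u x = gs (su u) x := by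
  rw [gs, gs, ← tsum_mul_left, ← tsum_shift (fun n => su u n * x ^ n) (by simp [su])]
  refine tsum_congr (fun n => ?_)
  show x * (u n * x ^ n) = su u (n + 1) * x ^ (n + 1)
  rw [su, pow_succ]
  ring

lemma identA (x : ℝ) :
    x * gs (dd (dd iseq)) x + gs (dd iseq) x - x * gs iseq x = 0 := by
  have g1 : Good (dd iseq) := good_dd good_iseq
  have g2 : Good (dd (dd iseq)) := good_dd g1
  have S1 : Summable fun n => su (dd (dd iseq)) n * x ^ n :=
    summable_su (summable_good g2 x)
  have S2 : Summable fun n => dd iseq n * x ^ n := summable_good g1 x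
  have S3 : Summable fun n => su iseq n * x ^ n := summable_su (summable_good good_iseq x)
  rw [mul_gs, mul_gs, gs, gs, gs, ← Summable.tsum_add S1 S2, ← Summable.tsum_sub (S1.add S2) S3]
  have : ∀ n : ℕ, su (dd (dd iseq)) n * x ^ n + dd iseq n * x ^ n - su iseq n * x ^ n = 0 := by
    intro n
    have h := coeffA n
    calc su (dd (dd iseq)) n * x ^ n + dd iseq n * x ^ n - su iseq n * x ^ n
        = (su (dd (dd iseq)) n + dd iseq n - su iseq n) * x ^ n := by ring
      _ = 0 := by rw [h, zero_mul]
  calc (∑' n, (su (dd (dd iseq)) n * x ^ n + dd iseq n * x ^ n - su iseq n * x ^ n))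
      = ∑' _ : ℕ, (0 : ℝ) := tsum_congr this
    _ = 0 := tsum_zero

lemma identB (x : ℝ) :
    x * gs (dd (dd sseq)) x + gs (dd sseq) x - x * gs sseq x
      - 2 * gs (dd iseq) x = 0 := by
  have g1 : Good (dd sseq) := good_dd good_sseq
  have g2 : Good (dd (dd sseq)) := good_dd g1
  have gi1 : Good (dd iseq) := good_dd good_iseq
  have S1 : Summable fun n => su (dd (dd sseq)) n * x ^ n :=
    summable_su (summable_good g2 x)
  have S2 : Summable fun n => dd sseq n * x ^ n := summable_good g1 x
  have S3 : Summable fun n => su sseq n * x ^ n := summable_su (summable_good good_sseq x)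
  have S4 : Summable fun n => 2 * (dd iseq n * x ^ n) := (summable_good gi1 x).mul_left 2
  have h2 : 2 * gs (dd iseq) x = ∑' n, 2 * (dd iseq n * x ^ n) := by
    rw [gs, ← tsum_mul_left]
  rw [mul_gs, mul_gs, gs, gs, gs, h2, ← Summable.tsum_add S1 S2, ← Summable.tsum_sub (S1.add S2) S3,
    ← Summable.tsum_sub ((S1.add S2).sub S3) S4]
  have : ∀ n : ℕ, su (dd (dd sseq)) n * x ^ n + dd sseq n * x ^ n - su sseq n * x ^ n
      - 2 * (dd iseq n * x ^ n) = 0 := by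
    intro n
    have h := coeffB n
    calc su (dd (dd sseq)) n * x ^ n + dd sseq n * x ^ n - su sseq n * x ^ n
          - 2 * (dd iseq n * x ^ n)
        = (su (dd (dd sseq)) n + dd sseq n - su sseq n - 2 * dd iseq n) * x ^ n := by ring
      _ = 0 := by rw [h, zero_mul]
  calc _ = ∑' _ : ℕ, (0 : ℝ) := tsum_congr this
    _ = 0 := tsum_zero

lemma gs_even (C : ℕ → ℝ) (x : ℝ) :
    gs (fun n => if n % 2 = 0 then C (n / 2) * ic (n / 2) else 0) x
      = ∑' k : ℕ, C k * ic k * x ^ (2 * k) := by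
  rw [gs]
  rw [← two_mul_injective.tsum_eq
    (f := fun n => (if n % 2 = 0 then C (n / 2) * ic (n / 2) else 0) * x ^ n) ?_]
  · refine tsum_congr (fun k => ?_)
    show (if (2 * k) % 2 = 0 then C ((2 * k) / 2) * ic ((2 * k) / 2) else 0) * x ^ (2 * k)
      = C k * ic k * x ^ (2 * k)
    rw [if_pos (by omega)]
    have h2 : (2 * k) / 2 = k := by omega
    rw [h2]
  · intro n hn
    rcases Nat.even_or_odd n with ⟨k, hk⟩ | ⟨k, hk⟩
    · exact ⟨k, by show 2 * k = n; omega⟩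
    · exfalso
      apply hn
      show (if n % 2 = 0 then C (n / 2) * ic (n / 2) else 0) * x ^ n = 0
      rw [if_neg (by omega), zero_mul]

lemma besselI0_eq (x : ℝ) : besselI0 x = gs iseq x := by
  have h2 := gs_even (fun _ : ℕ => (1 : ℝ)) x
  have h3 : gs iseq x = ∑' k : ℕ, (fun _ : ℕ => (1 : ℝ)) k * ic k * x ^ (2 * k) := by
    rw [← h2]
    congr 1
    funext n
    simp [iseq]
  rw [besselI0, h3]
  refine tsum_congr (fun k => ?_)
  show x ^ (2 * k) / (2 ^ (2 * k) * ((k.factorial : ℝ)) ^ 2) = 1 * ic k * x ^ (2 * k)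
  rw [ic, one_mul, div_eq_mul_inv, mul_comm]

lemma sPart_eq (x : ℝ) :
    (∑' n : ℕ, harmonicPhi n * x ^ (2 * n) / (2 ^ (2 * n) * ((n.factorial : ℝ)) ^ 2))
      = gs sseq x := by
  have h : sseq = fun n => if n % 2 = 0 then harmonicPhi (n / 2) * ic (n / 2) else 0 := rfl
  rw [h, gs_even]
  refine tsum_congr (fun k => ?_)
  rw [ic, div_eq_mul_inv]
  ring

noncomputable def Lf (x : ℝ) : ℝ := Real.log (x / 2) + Real.eulerMascheroniConstant

lemma besselK0_eq (x : ℝ) : besselK0 x = -Lf x * gs iseq x + gs sseq x := by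
  rw [besselK0, besselI0_eq, sPart_eq, Lf]

lemma hasDerivAt_Lf {x : ℝ} (hx : 0 < x) : HasDerivAt Lf x⁻¹ x := by
  have h1 : HasDerivAt (fun y : ℝ => y / 2) (1 / 2) x := by
    simpa using (hasDerivAt_id x).div_const 2
  have h2 : HasDerivAt (fun y : ℝ => Real.log (y / 2)) ((x / 2)⁻¹ * (1 / 2)) x :=
    (Real.hasDerivAt_log (by positivity)).comp x h1
  have h3 : (x / 2)⁻¹ * (1 / 2) = x⁻¹ := by
    field_simp
  rw [h3] at h2
  exact h2.add_const _

noncomputable def K1 (x : ℝ) : ℝ :=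
  -x⁻¹ * gs iseq x + -Lf x * gs (dd iseq) x + gs (dd sseq) x

noncomputable def K2 (x : ℝ) : ℝ :=
  (x ^ 2)⁻¹ * gs iseq x - 2 * x⁻¹ * gs (dd iseq) x - Lf x * gs (dd (dd iseq)) x
    + gs (dd (dd sseq)) x

lemma hasDerivAt_besselK0 {x : ℝ} (hx : 0 < x) : HasDerivAt besselK0 (K1 x) x := by
  have hI := hasDerivAt_gs good_iseq x
  have hS := hasDerivAt_gs good_sseq x
  have hL := (hasDerivAt_Lf hx).neg
  have h := (hL.mul hI).add hS
  have hfe : besselK0 = fun y => -Lf y * gs iseq y + gs sseq y := funext besselK0_eq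
  rw [hfe]
  exact h

lemma hasDerivAt_K1 {x : ℝ} (hx : 0 < x) : HasDerivAt K1 (K2 x) x := by
  have hI := hasDerivAt_gs good_iseq x
  have hI1 := hasDerivAt_gs (good_dd good_iseq) x
  have hI2 := hasDerivAt_gs (good_dd (good_dd good_iseq)) x
  have hS1 := hasDerivAt_gs (good_dd good_sseq) x
  have hS2 := hasDerivAt_gs (good_dd (good_dd good_sseq)) x
  have hL := (hasDerivAt_Lf hx).neg
  have hinv : HasDerivAt (fun y : ℝ => -y⁻¹) ((x ^ 2)⁻¹) x := by
    have := (hasDerivAt_inv hx.ne').neg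
    rw [neg_neg] at this
    exact this
  have h := ((hinv.mul hI).add (hL.mul hI1)).add hS1
  have hfe : K1 = fun y => (-y⁻¹ * gs iseq y + -Lf y * gs (dd iseq) y) + gs (dd sseq) y := by
    funext y
    simp only [K1]
  rw [hfe]
  exact h.congr_deriv (by simp only [K2, Pi.neg_apply]; ring)

end BesselAux

open BesselAux

/-- The modified Bessel function of the second kind of order zero `K₀` is well defined
(its defining series converges) and twice differentiable on `(0,∞)`, and satisfies the
modified Bessel equation of order zero: `x K₀''(x) + K₀'(x) − x K₀(x) = 0` for all
`x > 0`. -/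

theorem besselK0_wellDefined_and_ode :
    (∀ x ∈ Set.Ioi (0 : ℝ), Summable fun n : ℕ =>
      harmonicPhi n * x ^ (2 * n) / (2 ^ (2 * n) * ((n.factorial : ℝ)) ^ 2)) ∧
    (∀ x ∈ Set.Ioi (0 : ℝ), DifferentiableAt ℝ besselK0 x) ∧
    (∀ x ∈ Set.Ioi (0 : ℝ), DifferentiableAt ℝ (deriv besselK0) x) ∧
    (∀ x ∈ Set.Ioi (0 : ℝ),
      x * deriv (deriv besselK0) x + deriv besselK0 x - x * besselK0 x = 0) := by
  have hev : ∀ x : ℝ, 0 < x → deriv besselK0 =ᶠ[nhds x] K1 := by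
    intro x hx
    exact Filter.eventuallyEq_of_mem (isOpen_Ioi.mem_nhds hx)
      (fun y hy => (hasDerivAt_besselK0 hy).deriv)
  refine ⟨?_, ?_, ?_, ?_⟩
  · intro x hx
    have h := (summable_good good_sseq x).comp_injective two_mul_injective
    refine h.congr (fun k => ?_)
    show sseq (2 * k) * x ^ (2 * k)
      = harmonicPhi k * x ^ (2 * k) / (2 ^ (2 * k) * ((k.factorial : ℝ)) ^ 2)
    rw [sseq_even rfl, ic, div_eq_mul_inv]
    ring
  · intro x hx
    exact (hasDerivAt_besselK0 hx).differentiableAt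
  · intro x hx
    exact (hasDerivAt_K1 hx).differentiableAt.congr_of_eventuallyEq (hev x hx)
  · intro x hx
    have hx' : (0 : ℝ) < x := hx
    have hd1 : deriv besselK0 x = K1 x := (hasDerivAt_besselK0 hx').deriv
    have hd2 : deriv (deriv besselK0) x = K2 x := by
      rw [(hev x hx').deriv_eq]
      exact (hasDerivAt_K1 hx').deriv
    rw [hd1, hd2, besselK0_eq]
    have hA := identA x
    have hB := identB x
    have hx0 : x ≠ 0 := ne_of_gt hx'
    have h1 : x * x⁻¹ = 1 := mul_inv_cancel₀ hx0
    have h2 : x * (x ^ 2)⁻¹ = x⁻¹ := by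
      rw [sq, mul_inv, ← mul_assoc, h1, one_mul]
    simp only [K1, K2]
    linear_combination (-(Lf x)) * hA + hB + (gs iseq x) * h2 + (-2 * gs (dd iseq) x) * h1
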